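/- (Proposition 3.2, Lipschitz estimate, case k = 0.) Let A be a unital C*-algebra over ℂ and let μ be a finite complex Borel measure on ℝ with ∫_ℝ |ξ| d|μ|(ξ) < ∞. Then for all self-adjoint X, Y ∈ A, ‖f_μ(X) − f_μ(Y)‖ ≤ (∫_ℝ |ξ| d|μ|(ξ)) · ‖X − Y‖. -/

import Mathlib

open MeasureTheory NormedSpace

/-- `exp(i t X)` in a complex Banach algebra, for `t : ℝ`. -/
noncomputable def uexp {A : Type*} [NormedRing A] [NormedAlgebra ℂ A]
    (t : ℝ) (X : A) : A :=
  NormedSpace.exp ((Complex.I * (t : ℂ)) • X)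

/-- `f_μ(X) := ∫_ℝ exp(iξX) dμ(ξ)` (Bochner integral in `A`), for a finite complex
Borel measure `μ` on `ℝ` represented by its total variation `ν = |μ|` together with a
unimodular density `ρ` (so that `dμ = ρ dν`). -/
noncomputable def fmu {A : Type*} [NormedRing A] [NormedAlgebra ℂ A] [CompleteSpace A]
    (ν : Measure ℝ) (ρ : ℝ → ℂ) (X : A) : A :=
  ∫ ξ, ρ ξ • uexp ξ X ∂ν

/-- The first-derivative formula
`df_μ(X)(Y) = ∫₀¹ ∫_ℝ iξ exp(iαξX) Y exp(i(1−α)ξX) dμ(ξ) dα`. -/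
noncomputable def dfmu {A : Type*} [NormedRing A] [NormedAlgebra ℂ A] [CompleteSpace A]
    (ν : Measure ℝ) (ρ : ℝ → ℂ) (X Y : A) : A :=
  ∫ α in (0 : ℝ)..1,
    ∫ ξ, (ρ ξ * (ξ : ℂ) * Complex.I) •
      (uexp (α * ξ) X * Y * uexp ((1 - α) * ξ) X) ∂ν

/-- Proposition 3.2, Lipschitz estimate, case `k = 0`. Let `A` be a
unital C*-algebra over `ℂ` and `μ` a finite complex Borel measure on `ℝ` (given by its
total variation `ν` and unimodular density `ρ`) with `∫ |ξ| d|μ|(ξ) < ∞`. Then for all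
self-adjoint `X, Y ∈ A`, `‖f_μ(X) − f_μ(Y)‖ ≤ (∫ |ξ| d|μ|(ξ)) ‖X − Y‖`. -/
lemma smul_mem_skewAdjoint {A : Type*} [CStarAlgebra A] {X : A} (hX : IsSelfAdjoint X)
    (t : ℝ) : (Complex.I * (t : ℂ)) • X ∈ skewAdjoint A := by
  rw [skewAdjoint.mem_iff, star_smul, hX.star_eq, ← neg_smul]
  congr 1
  simp [Complex.ext_iff]

lemma uexp_mem_unitary {A : Type*} [CStarAlgebra A] {X : A} (hX : IsSelfAdjoint X)
    (t : ℝ) : uexp t X ∈ unitary A := by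
  letI : NormedAlgebra ℚ A := .restrictScalars ℚ ℂ A
  exact NormedSpace.exp_mem_unitary_of_mem_skewAdjoint (smul_mem_skewAdjoint hX t)

lemma real_smul_skew {A : Type*} [CStarAlgebra A] {X : A} (hX : IsSelfAdjoint X)
    (t α : ℝ) : α • ((Complex.I * (t : ℂ)) • X) ∈ skewAdjoint A := by
  have := (smul_mem_skewAdjoint hX t)
  rw [skewAdjoint.mem_iff] at this ⊢
  rw [star_smul, star_trivial, this, smul_neg]

lemma key {A : Type*} [CStarAlgebra A] (ξ : ℝ) (X Y : A)
    (hX : IsSelfAdjoint X) (hY : IsSelfAdjoint Y) :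
    ‖uexp ξ X - uexp ξ Y‖ ≤ |ξ| * ‖X - Y‖ := by
  set B := (Complex.I * (ξ : ℂ)) • X with hB
  set C := (Complex.I * (ξ : ℂ)) • Y with hC
  have hexp : (NormedSpace.exp : A → A) = NormedSpace.exp := rfl
  set g : ℝ → A := fun α => exp (α • B) * exp ((1 - α) • C) with hg
  have hg1 : g 1 = uexp ξ X := by
    simp [hg, uexp, NormedSpace.exp_zero, ← hexp, hB]
  have hg0 : g 0 = uexp ξ Y := by
    simp [hg, uexp, NormedSpace.exp_zero, ← hexp, hC]
  have hderiv : ∀ α : ℝ, HasDerivAt g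
      (exp (α • B) * (B - C) * exp ((1 - α) • C)) α := by
    intro α
    have h1 : HasDerivAt (fun α : ℝ => exp (α • B)) (exp (α • B) * B) α :=
      hasDerivAt_exp_smul_const B α
    have h2' : HasDerivAt (fun α : ℝ => (1 - α : ℝ)) (-1) α := by
      simpa using (hasDerivAt_id α).const_sub 1
    have h2 : HasDerivAt (fun α : ℝ => exp ((1 - α) • C))
        ((-1 : ℝ) • (C * exp ((1 - α) • C))) α :=
      (hasDerivAt_exp_smul_const' C ((1 : ℝ) - α)).scomp α h2'
    have := h1.mul h2
    convert this using 1
    · rfl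
    rw [neg_one_smul]
    noncomm_ring
  have hbound : ∀ α ∈ Set.Ico (0:ℝ) 1,
      ‖exp (α • B) * (B - C) * exp ((1 - α) • C)‖ ≤ |ξ| * ‖X - Y‖ := by
    intro α _
    letI : NormedAlgebra ℚ A := .restrictScalars ℚ ℂ A
    have hu1 : exp (α • B) ∈ unitary A :=
      NormedSpace.exp_mem_unitary_of_mem_skewAdjoint (real_smul_skew hX ξ α)
    have hu2 : exp ((1 - α) • C) ∈ unitary A :=
      NormedSpace.exp_mem_unitary_of_mem_skewAdjoint (real_smul_skew hY ξ (1 - α))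
    calc ‖exp (α • B) * (B - C) * exp ((1 - α) • C)‖
        = ‖exp (α • B) * (B - C)‖ := CStarRing.norm_mul_mem_unitary _ hu2
      _ = ‖B - C‖ := CStarRing.norm_mem_unitary_mul _ hu1
      _ = |ξ| * ‖X - Y‖ := by
          rw [hB, hC, ← smul_sub, norm_smul]
          simp [Complex.norm_def]
      _ ≤ |ξ| * ‖X - Y‖ := le_rfl
  have := norm_image_sub_le_of_norm_deriv_le_segment_01'
    (fun α _ => (hderiv α).hasDerivWithinAt) hbound
  rwa [hg1, hg0] at this

theorem fmu_lipschitz_aux {A : Type*} [CStarAlgebra A]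
    (ν : Measure ℝ) [IsFiniteMeasure ν]
    (ρ : ℝ → ℂ) (hρm : Measurable ρ) (hρ1 : ∀ ξ, ‖ρ ξ‖ = 1)
    (hint : Integrable (fun ξ : ℝ => ξ) ν)
    (X Y : A) (hX : IsSelfAdjoint X) (hY : IsSelfAdjoint Y) :
    ‖(∫ ξ, ρ ξ • uexp ξ X ∂ν) - (∫ ξ, ρ ξ • uexp ξ Y ∂ν)‖ ≤ (∫ ξ, |ξ| ∂ν) * ‖X - Y‖ := by
  have hcont : ∀ Z : A, Continuous fun ξ : ℝ => uexp ξ Z := by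
    intro Z
    letI : NormedAlgebra ℚ A := .restrictScalars ℚ ℂ A
    exact NormedSpace.exp_continuous.comp (by fun_prop)
  have hmeas : ∀ Z : A, AEStronglyMeasurable (fun ξ => ρ ξ • uexp ξ Z) ν := fun Z =>
    hρm.aestronglyMeasurable.smul (hcont Z).aestronglyMeasurable
  have hintg : ∀ Z : A, IsSelfAdjoint Z → Integrable (fun ξ => ρ ξ • uexp ξ Z) ν := by
    intro Z hZ
    refine (integrable_const (1:ℝ)).mono' (hmeas Z) (Filter.Eventually.of_forall fun ξ => ?_)
    rcases subsingleton_or_nontrivial A with h | h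
    · simp [Subsingleton.elim (ρ ξ • uexp ξ Z) 0]
    · rw [norm_smul, hρ1, CStarRing.norm_of_mem_unitary (uexp_mem_unitary hZ ξ), mul_one]
  rw [← integral_sub (hintg X hX) (hintg Y hY)]
  have habs : Integrable (fun ξ : ℝ => |ξ| * ‖X - Y‖) ν := hint.abs.mul_const _
  calc ‖∫ ξ, (ρ ξ • uexp ξ X - ρ ξ • uexp ξ Y) ∂ν‖
      ≤ ∫ ξ, |ξ| * ‖X - Y‖ ∂ν := by
        refine norm_integral_le_of_norm_le habs (Filter.Eventually.of_forall fun ξ => ?_)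
        rw [← smul_sub, norm_smul, hρ1, one_mul]
        exact key ξ X Y hX hY
    _ = (∫ ξ, |ξ| ∂ν) * ‖X - Y‖ := by rw [integral_mul_const]


theorem fmu_lipschitz {A : Type*} [CStarAlgebra A]
    (ν : Measure ℝ) [IsFiniteMeasure ν]
    (ρ : ℝ → ℂ) (hρm : Measurable ρ) (hρ1 : ∀ ξ, ‖ρ ξ‖ = 1)
    (hint : Integrable (fun ξ : ℝ => ξ) ν)
    (X Y : A) (hX : IsSelfAdjoint X) (hY : IsSelfAdjoint Y) :
    ‖fmu ν ρ X - fmu ν ρ Y‖ ≤ (∫ ξ, |ξ| ∂ν) * ‖X - Y‖ := by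
  simpa [fmu] using fmu_lipschitz_aux ν ρ hρm hρ1 hint X Y hX hY
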